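/- Fix x₀ ∈ ℝ^d, α > 2, M > 0, and let w(x) = M(R^{−α} − |x − x₀|^{−α}). Let 0 < λ ≤ Λ and suppose λ(α+2) − dΛ ≥ 1. Then the eigenvalues of D²w(x) are Mα(1 − (α+2))/|x−x₀|^{α+2} (simple, in direction x − x₀) and Mα/|x−x₀|^{α+2} (with multiplicity d−1), and for any (λ,Λ)-uniformly elliptic F with F(0)=0 one has F(D²w(x)) ≥ Mα/|x−x₀|^{α+2} for all x ≠ x₀. -/

import Mathlib

open scoped RealInnerProductSpace

def UniformlyElliptic {d : ℕ} (lam Lam : ℝ) (F : Matrix (Fin d) (Fin d) ℝ → ℝ) : Prop :=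
  ∀ M N : Matrix (Fin d) (Fin d) ℝ, M.IsSymm → ∀ hN : N.PosSemidef,
    lam * (⨆ i, hN.1.eigenvalues i) ≤ F M - F (M + N) ∧
    F M - F (M + N) ≤ Lam * (⨆ i, hN.1.eigenvalues i)

/-- The Hessian matrix of the barrier `w(x) = M(R^{−α} − |x − x₀|^{−α})`:
`D²w(x) = Mα(I/|x−x₀|^{α+2} − (α+2)(x−x₀)⊗(x−x₀)/|x−x₀|^{α+4})`. -/
noncomputable def barrierHessian {d : ℕ} (x₀ : EuclideanSpace ℝ (Fin d)) (α M : ℝ)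
    (x : EuclideanSpace ℝ (Fin d)) : Matrix (Fin d) (Fin d) ℝ :=
  fun i j => M * α * ((if i = j then 1 else 0) / ‖x - x₀‖ ^ (α + 2)
    - (α + 2) * (x i - x₀ i) * (x j - x₀ j) / ‖x - x₀‖ ^ (α + 4))

open Matrix

lemma aux_eig_mem {d : ℕ} {N : Matrix (Fin d) (Fin d) ℝ} (hN : N.IsHermitian)
    {u : Fin d → ℝ} (hu : u ≠ 0) {s : ℝ} (h : N *ᵥ u = s • u) :
    ∃ i, hN.eigenvalues i = s := by
  by_contra hc
  push_neg at hc
  apply hu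
  have key : ∀ i, ⇑(hN.eigenvectorBasis i) ⬝ᵥ u = 0 := by
    intro i
    have h1 : ⇑(hN.eigenvectorBasis i) ⬝ᵥ (N *ᵥ u)
        = hN.eigenvalues i * (⇑(hN.eigenvectorBasis i) ⬝ᵥ u) := by
      rw [dotProduct_mulVec]
      have hvm : ⇑(hN.eigenvectorBasis i) ᵥ* N
          = hN.eigenvalues i • ⇑(hN.eigenvectorBasis i) := by
        have hsym : Nᵀ = N := by simpa using hN.eq
        rw [← mulVec_transpose, hsym, hN.mulVec_eigenvectorBasis]
      rw [hvm, smul_dotProduct, smul_eq_mul]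
    have h2 : ⇑(hN.eigenvectorBasis i) ⬝ᵥ (N *ᵥ u)
        = s * (⇑(hN.eigenvectorBasis i) ⬝ᵥ u) := by
      rw [h, dotProduct_smul, smul_eq_mul]
    have h3 : (hN.eigenvalues i - s) * (⇑(hN.eigenvectorBasis i) ⬝ᵥ u) = 0 := by
      rw [sub_mul, ← h1, ← h2, sub_self]
    rcases mul_eq_zero.mp h3 with h' | h'
    · exact absurd (by linarith [sub_eq_zero.mp h']) (hc i)
    · exact h'
  have hrepr : hN.eigenvectorBasis.repr (WithLp.toLp 2 u) = 0 := by
    apply PiLp.ext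
    intro i
    rw [hN.eigenvectorBasis.repr_apply_apply]
    have := key i
    simpa [PiLp.inner_apply, dotProduct, RCLike.inner_apply, conj_trivial, mul_comm] using this
  simpa using congrArg WithLp.ofLp (hN.eigenvectorBasis.repr.map_eq_zero_iff.mp hrepr)

lemma aux_eig_smul_one {d : ℕ} (c : ℝ) (h : ((c • (1 : Matrix (Fin d) (Fin d) ℝ))).IsHermitian)
    (i : Fin d) : h.eigenvalues i = c := by
  rw [Matrix.IsHermitian.eigenvalues_eq]
  have hb : ⇑(h.eigenvectorBasis i) ⬝ᵥ ⇑(h.eigenvectorBasis i) = 1 := by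
    have h1 := h.eigenvectorBasis.orthonormal.1 i
    have h2 : ⟪h.eigenvectorBasis i, h.eigenvectorBasis i⟫ = (1:ℝ) := by
      rw [real_inner_self_eq_norm_mul_norm, h1, mul_one]
    rw [EuclideanSpace.inner_eq_star_dotProduct] at h2
    simpa using h2
  simp [Matrix.smul_mulVec, Matrix.one_mulVec, dotProduct_smul, hb, star_trivial]

theorem stmt_9 {d : ℕ} (x₀ : EuclideanSpace ℝ (Fin d)) (α M lam Lam : ℝ)
    (hα : 2 < α) (hM : 0 < M) (hlam : 0 < lam) (hlL : lam ≤ Lam)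
    (hell : lam * (α + 2) - d * Lam ≥ 1)
    (x : EuclideanSpace ℝ (Fin d)) (hx : x ≠ x₀) :
    (barrierHessian x₀ α M x).mulVec (fun i => x i - x₀ i) =
      (M * α * (1 - (α + 2)) / ‖x - x₀‖ ^ (α + 2)) • (fun i => x i - x₀ i) ∧
    (∀ v : EuclideanSpace ℝ (Fin d), ⟪x - x₀, v⟫ = 0 →
      (barrierHessian x₀ α M x).mulVec (fun i => v i) =
        (M * α / ‖x - x₀‖ ^ (α + 2)) • (fun i => v i)) ∧
    ∀ F : Matrix (Fin d) (Fin d) ℝ → ℝ, F 0 = 0 → UniformlyElliptic lam Lam F →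
      M * α / ‖x - x₀‖ ^ (α + 2) ≤ F (barrierHessian x₀ α M x) := by
  set r := ‖x - x₀‖ with hrdef
  have hr0 : 0 < r := norm_pos_iff.mpr (sub_ne_zero.mpr hx)
  have hsum : ∑ j, (x j - x₀ j) * (x j - x₀ j) = r ^ (2:ℕ) := by
    rw [hrdef, ← real_inner_self_eq_norm_sq, EuclideanSpace.inner_eq_star_dotProduct]
    simp [dotProduct]
  have hpow : r ^ (α + 4) = r ^ (α + 2) * r ^ (2:ℕ) := by
    rw [show α + 4 = (α + 2) + (2:ℝ) by ring, Real.rpow_add hr0]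
    norm_num [Real.rpow_natCast]
  have hp2pos : 0 < r ^ (α + 2) := Real.rpow_pos_of_pos hr0 _
  have hp2 : r ^ (α + 2) ≠ 0 := ne_of_gt hp2pos
  have hp4pos : 0 < r ^ (α + 4) := Real.rpow_pos_of_pos hr0 _
  have hp4 : r ^ (α + 4) ≠ 0 := ne_of_gt hp4pos
  refine ⟨?_, ?_, ?_⟩
  · funext i
    simp only [Matrix.mulVec, dotProduct, barrierHessian, Pi.smul_apply, smul_eq_mul]
    have step : ∀ j, M * α * ((if i = j then 1 else 0) / r ^ (α + 2)
          - (α + 2) * (x i - x₀ i) * (x j - x₀ j) / r ^ (α + 4)) * (x j - x₀ j)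
        = (if j = i then M * α / r ^ (α + 2) * (x j - x₀ j) else 0)
          - M * α * (α + 2) * (x i - x₀ i) / r ^ (α + 4) * ((x j - x₀ j) * (x j - x₀ j)) := by
      intro j
      rcases eq_or_ne i j with h | h
      · subst h; simp; ring
      · simp [h, Ne.symm h]; ring
    rw [Finset.sum_congr rfl (fun j _ => step j), Finset.sum_sub_distrib,
      Finset.sum_ite_eq' Finset.univ i, ← Finset.mul_sum, hsum]
    simp only [Finset.mem_univ, if_true]
    rw [hpow]
    field_simp
  · intro v hv
    have hvsum : ∑ j, (x j - x₀ j) * v j = 0 := by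
      rw [← hv]
      simp [PiLp.inner_apply]
      exact Finset.sum_congr rfl fun j _ => mul_comm _ _
    funext i
    simp only [Matrix.mulVec, dotProduct, barrierHessian, Pi.smul_apply, smul_eq_mul]
    have step : ∀ j, M * α * ((if i = j then 1 else 0) / r ^ (α + 2)
          - (α + 2) * (x i - x₀ i) * (x j - x₀ j) / r ^ (α + 4)) * v j
        = (if j = i then M * α / r ^ (α + 2) * v j else 0)
          - M * α * (α + 2) * (x i - x₀ i) / r ^ (α + 4) * ((x j - x₀ j) * v j) := by
      intro j
      rcases eq_or_ne i j with h | h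
      · subst h; simp; ring
      · simp [h, Ne.symm h]; ring
    rw [Finset.sum_congr rfl (fun j _ => step j), Finset.sum_sub_distrib,
      Finset.sum_ite_eq' Finset.univ i, ← Finset.mul_sum, hvsum]
    simp only [Finset.mem_univ, if_true]
    ring
  · intro F hF0 hFe
    have hd : 0 < d := by
      rcases Nat.eq_zero_or_pos d with h0 | h0
      · subst h0
        exact absurd (PiLp.ext fun i => Fin.elim0 i : x = x₀) hx
      · exact h0
    haveI : Nonempty (Fin d) := Fin.pos_iff_nonempty.mp hd
    set c : ℝ := M * α / r ^ (α + 2) with hcdef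
    have hc : 0 < c := by positivity
    set u : Fin d → ℝ := fun i => x i - x₀ i with hudef
    set t : ℝ := M * α * (α + 2) / r ^ (α + 4) with htdef
    set A := barrierHessian x₀ α M x with hAdef
    set N : Matrix (Fin d) (Fin d) ℝ := fun i j => t * (u i * u j) with hNdef
    have hAN : A + N = c • (1 : Matrix (Fin d) (Fin d) ℝ) := by
      funext i j
      rw [Matrix.add_apply]
      simp only [hAdef, hNdef, Matrix.add_apply, Pi.add_apply, barrierHessian, Matrix.smul_apply,
        Matrix.one_apply, smul_eq_mul, htdef, hudef]
      rcases eq_or_ne i j with h | h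
      · subst h
        simp only [if_pos rfl, ← hrdef, hcdef]
        ring
      · simp only [if_neg h, ← hrdef, hcdef]
        ring
    have hAsymm : A.IsSymm := by
      apply Matrix.IsSymm.ext
      intro i j
      simp only [hAdef, barrierHessian]
      rcases eq_or_ne i j with h | h
      · subst h; ring
      · rw [if_neg h, if_neg (Ne.symm h)]
        ring
    have ht : 0 < t := by
      have : (0:ℝ) < α + 2 := by linarith
      positivity
    have hNy : ∀ y : Fin d → ℝ, N *ᵥ y = (t * ∑ j, u j * y j) • u := by
      intro y
      funext i
      simp only [Matrix.mulVec, dotProduct, hNdef, Pi.smul_apply, smul_eq_mul,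
        Finset.mul_sum, Finset.sum_mul]
      exact Finset.sum_congr rfl fun j _ => by ring
    have hNdot : ∀ y : Fin d → ℝ, y ⬝ᵥ (N *ᵥ y) = t * (∑ j, u j * y j)^2 := by
      intro y
      rw [hNy y, dotProduct_smul, smul_eq_mul]
      have hyu : y ⬝ᵥ u = ∑ j, u j * y j := by
        simp only [dotProduct]
        exact Finset.sum_congr rfl fun j _ => by ring
      rw [hyu]
      ring
    have hNpsd : N.PosSemidef := by
      refine Matrix.PosSemidef.of_dotProduct_mulVec_nonneg ?_ ?_
      · apply Matrix.IsHermitian.ext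
        intro i j
        simp only [hNdef, star_trivial]
        ring
      · intro y
        rw [star_trivial, hNdot y]
        exact mul_nonneg ht.le (sq_nonneg _)
    have hCpsd : ((c • (1 : Matrix (Fin d) (Fin d) ℝ))).PosSemidef := by
      refine Matrix.PosSemidef.of_dotProduct_mulVec_nonneg ?_ ?_
      · apply Matrix.IsHermitian.ext
        intro i j
        simp only [Matrix.smul_apply, Matrix.one_apply, star_trivial]
        rcases eq_or_ne i j with h | h
        · subst h; rfl
        · rw [if_neg h, if_neg (Ne.symm h)]
      · intro y
        rw [star_trivial, Matrix.smul_mulVec, Matrix.one_mulVec, dotProduct_smul,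
          smul_eq_mul]
        have hyy : y ⬝ᵥ y = ∑ j, y j * y j := rfl
        rw [hyy]
        exact mul_nonneg hc.le (Finset.sum_nonneg fun j _ => mul_self_nonneg _)
    -- N has eigenvalue c * (α + 2) with eigenvector u
    have hu0 : u ≠ 0 := by
      intro h
      have : (0:ℝ) = r ^ (2:ℕ) := by
        rw [← hsum]
        simp [show ∀ j, x j - x₀ j = 0 from fun j => congrFun h j]
      nlinarith
    have heig : N *ᵥ u = (c * (α + 2)) • u := by
      rw [hNy u]
      have husum : ∑ j, u j * u j = r ^ (2:ℕ) := hsum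
      rw [husum]
      congr 1
      rw [htdef, hcdef, hpow]
      field_simp
    obtain ⟨i₀, hi₀⟩ := aux_eig_mem hNpsd.1 hu0 heig
    have hsup1 : c * (α + 2) ≤ ⨆ i, hNpsd.1.eigenvalues i := by
      rw [← hi₀]
      exact le_ciSup (Set.Finite.bddAbove (Set.finite_range _)) i₀
    have hsup2 : (⨆ i, hCpsd.1.eigenvalues i) = c := by
      have : ∀ i, hCpsd.1.eigenvalues i = c := fun i => aux_eig_smul_one c hCpsd.1 i
      simp only [this]
      exact ciSup_const
    have e1 := (hFe A N hAsymm hNpsd).1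
    rw [hAN] at e1
    have e1' : lam * (c * (α + 2)) ≤ F A - F (c • 1) :=
      le_trans (mul_le_mul_of_nonneg_left hsup1 hlam.le) e1
    have e2 := (hFe 0 (c • 1) Matrix.isSymm_zero hCpsd).2
    rw [zero_add, hF0, hsup2, zero_sub] at e2
    -- e2 : -F (c • 1) ≤ Lam * c
    have hd1 : (1:ℝ) ≤ (d:ℝ) := by exact_mod_cast hd
    have hLam : 0 < Lam := lt_of_lt_of_le hlam hlL
    have key : c ≤ F A := by
      nlinarith [mul_nonneg (mul_nonneg (sub_nonneg.mpr hd1) hLam.le) hc.le,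
        mul_nonneg (sub_nonneg.mpr (by linarith : (1:ℝ) ≤ lam * (α + 2) - d * Lam)) hc.le]
    exact key
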